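/- arXiv:0908.2590 — 2 statements merged into one kernel-verified Lean document; each statement's English description precedes it below -/
import Mathlib

section
/- Let (S, d) be a metric space, let δ > 0, and let V be a countable subset of S that is dense in itself. Then there exists a graph with vertex set V that is geometrically existentially closed at level δ and has threshold δ (i.e., a geometric δ-graph with vertex set V). -/
open MeasureTheory Metric

/-- Pairs of distinct points of `V` at distance less than `δ`: potential edges. -/
def LargEdges {S : Type*} [MetricSpace S] (V : Set S) (δ : ℝ) : Set (Sym2 V) :=
  {e | ¬ e.IsDiag ∧ ∀ u v : V, e = s(u, v) → dist (u : S) (v : S) < δ}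

/-- The graph on `V` determined by a sample `ω` of the LARG model. -/
def largGraph {S : Type*} [MetricSpace S] (V : Set S) (δ : ℝ)
    (ω : LargEdges V δ → Bool) : SimpleGraph V where
  Adj u v := ∃ h : s(u, v) ∈ LargEdges V δ, ω ⟨s(u, v), h⟩ = true
  symm := by
    constructor
    intro u v h
    beta_reduce at h ⊢
    rwa [Sym2.eq_swap]
  loopless := by
    constructor
    rintro u ⟨h, -⟩
    exact h.1 (by simp)

/-- `G` is geometrically existentially closed at level `δ`. -/
def IsGEC {S : Type*} [MetricSpace S] {V : Set S} (G : SimpleGraph V) (δ : ℝ) : Prop :=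
  ∀ δ' : ℝ, 0 < δ' → δ' < δ → ∀ x : V, ∀ A B : Finset V,
    Disjoint A B → x ∉ A → x ∉ B →
    (∀ u : V, u ∈ A ∨ u ∈ B → dist (u : S) (x : S) < δ) →
    ∃ z : V, z ∉ A ∧ z ∉ B ∧ z ≠ x ∧
      (∀ a ∈ A, G.Adj z a) ∧ (∀ b ∈ B, ¬ G.Adj z b) ∧
      (∀ u : V, u ∈ A ∨ u ∈ B → dist (u : S) (z : S) < δ) ∧ dist (x : S) (z : S) < δ'

/-- `G` has threshold `δ`: adjacent vertices are at distance less than `δ`. -/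
def HasThreshold {S : Type*} [MetricSpace S] {V : Set S} (G : SimpleGraph V) (δ : ℝ) : Prop :=
  ∀ u v : V, G.Adj u v → dist (u : S) (v : S) < δ

/-- A geometric `δ`-graph: `δ`-g.e.c. with threshold `δ`. -/
def IsGeometricGraph {S : Type*} [MetricSpace S] {V : Set S} (G : SimpleGraph V) (δ : ℝ) : Prop :=
  IsGEC G δ ∧ HasThreshold G δ

/-- A set is dense in itself. -/
def DenseInItself {S : Type*} [MetricSpace S] (V : Set S) : Prop :=
  ∀ x ∈ V, ∀ ε : ℝ, 0 < ε → ∃ y ∈ V, y ≠ x ∧ dist y x < ε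

/-- A graph is existentially closed. -/
def IsEC {α : Type*} (G : SimpleGraph α) : Prop :=
  ∀ A B : Finset α, Disjoint A B →
    ∃ z : α, z ∉ A ∧ z ∉ B ∧ (∀ a ∈ A, G.Adj z a) ∧ (∀ b ∈ B, ¬ G.Adj z b)

/-- A metrically convex set. -/
def MetricConvex {S : Type*} [MetricSpace S] (C : Set S) : Prop :=
  ∀ x ∈ C, ∀ y ∈ C, ∃ z ∈ C, dist x z + dist z y = dist x y

/-- `f : V → W` is a step-isometry at level `(δ, γ)`. -/
def IsStepIsometry {S T : Type*} [MetricSpace S] [MetricSpace T]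
    {V : Set S} {W : Set T} (f : V → W) (δ γ : ℝ) : Prop :=
  Function.Surjective f ∧
    ∀ u v : V, ⌊dist (u : S) (v : S) / δ⌋ = ⌊dist ((f u : T)) ((f v : T)) / γ⌋

/-- Quotient of `v` w.r.t. offset `δ` and anchor `v₀`. -/
noncomputable def quot' (δ v₀ v : ℝ) : ℤ := ⌊(v - v₀) / δ⌋

/-- Representative of `v` w.r.t. offset `δ` and anchor `v₀`. -/
noncomputable def repr' (δ v₀ v : ℝ) : ℝ := v - v₀ - δ * ⌊(v - v₀) / δ⌋


section LargConstruction

attribute [local instance] Classical.propDecidable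

variable {S : Type*} [MetricSpace S]

/-- Requirement: a rational radius, a centre, and two finite sets. -/
abbrev GReq (V : Set S) := ℚ × ↥V × Finset ↥V × Finset ↥V

/-- The property that a fresh witness for a requirement exists. -/
def GReqP (δ : ℝ) (V : Set S) (st : Finset (Sym2 ↥V) × Finset ↥V) (r : GReq V) : Prop :=
  ∃ z : ↥V, z ∉ st.2 ∧ z ∉ r.2.2.1 ∧ z ∉ r.2.2.2 ∧ z ≠ r.2.1 ∧
    (∀ u ∈ r.2.2.1 ∪ r.2.2.2, dist (u : S) (z : S) < δ) ∧
    dist ((r.2.1 : S)) (z : S) < (r.1 : ℝ)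

/-- One step of the construction. -/
noncomputable def gStep (δ : ℝ) (V : Set S) (st : Finset (Sym2 ↥V) × Finset ↥V)
    (r : GReq V) : Finset (Sym2 ↥V) × Finset ↥V :=
  if h : GReqP δ V st r then
    (st.1 ∪ r.2.2.1.image (fun a => s(h.choose, a)),
     insert h.choose (insert r.2.1 (st.2 ∪ r.2.2.1 ∪ r.2.2.2)))
  else st

lemma gStep_spec (δ : ℝ) (V : Set S) (st : Finset (Sym2 ↥V) × Finset ↥V)
    (r : GReq V) (hP : GReqP δ V st r) :
    ∃ z : ↥V, (z ∉ st.2 ∧ z ∉ r.2.2.1 ∧ z ∉ r.2.2.2 ∧ z ≠ r.2.1 ∧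
      (∀ u ∈ r.2.2.1 ∪ r.2.2.2, dist (u : S) (z : S) < δ) ∧
      dist ((r.2.1 : S)) (z : S) < (r.1 : ℝ)) ∧
    gStep δ V st r = (st.1 ∪ r.2.2.1.image (fun a => s(z, a)),
      insert z (insert r.2.1 (st.2 ∪ r.2.2.1 ∪ r.2.2.2))) := by
  refine ⟨hP.choose, hP.choose_spec, ?_⟩
  rw [gStep, dif_pos hP]

lemma gStep_neg (δ : ℝ) (V : Set S) (st : Finset (Sym2 ↥V) × Finset ↥V)
    (r : GReq V) (hP : ¬ GReqP δ V st r) : gStep δ V st r = st := by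
  rw [gStep, dif_neg hP]

/-- The stages of the construction. -/
noncomputable def gStages (δ : ℝ) (V : Set S) (f : ℕ → GReq V) :
    ℕ → Finset (Sym2 ↥V) × Finset ↥V
  | 0 => (∅, ∅)
  | n + 1 => gStep δ V (gStages δ V f n) (f n)

lemma gStep_subset (δ : ℝ) (V : Set S) (st : Finset (Sym2 ↥V) × Finset ↥V) (r : GReq V) :
    st.1 ⊆ (gStep δ V st r).1 ∧ st.2 ⊆ (gStep δ V st r).2 := by
  by_cases hP : GReqP δ V st r
  · obtain ⟨z, _, heq⟩ := gStep_spec δ V st r hP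
    rw [heq]
    refine ⟨Finset.subset_union_left, ?_⟩
    intro a ha
    simp only [Finset.mem_insert, Finset.mem_union]
    tauto
  · rw [gStep_neg δ V st r hP]
    exact ⟨subset_rfl, subset_rfl⟩

lemma gStages_mono (δ : ℝ) (V : Set S) (f : ℕ → GReq V) {n m : ℕ} (h : n ≤ m) :
    (gStages δ V f n).1 ⊆ (gStages δ V f m).1 ∧ (gStages δ V f n).2 ⊆ (gStages δ V f m).2 := by
  induction m, h using Nat.le_induction with
  | base => exact ⟨subset_rfl, subset_rfl⟩
  | succ m hm ih =>
    have h2 := gStep_subset δ V (gStages δ V f m) (f m)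
    exact ⟨ih.1.trans h2.1, ih.2.trans h2.2⟩

lemma gStages_endpoints (δ : ℝ) (V : Set S) (f : ℕ → GReq V) :
    ∀ n (u v : ↥V), s(u, v) ∈ (gStages δ V f n).1 →
      u ∈ (gStages δ V f n).2 ∧ v ∈ (gStages δ V f n).2 := by
  intro n
  induction n with
  | zero => simp [gStages]
  | succ n ih =>
    intro u v huv
    simp only [gStages] at huv ⊢
    by_cases hP : GReqP δ V (gStages δ V f n) (f n)
    · obtain ⟨z, _, heq⟩ := gStep_spec δ V (gStages δ V f n) (f n) hP
      rw [heq] at huv ⊢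
      simp only [Finset.mem_union, Finset.mem_image] at huv
      rcases huv with huv | ⟨a, ha, hae⟩
      · have := ih u v huv
        simp only [Finset.mem_insert, Finset.mem_union]
        tauto
      · rw [Sym2.eq_iff] at hae
        simp only [Finset.mem_insert, Finset.mem_union]
        rcases hae with ⟨h1, h2⟩ | ⟨h1, h2⟩ <;> subst h1 <;> subst h2 <;> tauto
    · rw [gStep_neg δ V (gStages δ V f n) (f n) hP] at huv ⊢
      exact ih u v huv

lemma gStages_threshold (δ : ℝ) (V : Set S) (f : ℕ → GReq V) :
    ∀ n (u v : ↥V), s(u, v) ∈ (gStages δ V f n).1 →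
      u ≠ v ∧ dist (u : S) (v : S) < δ := by
  intro n
  induction n with
  | zero => simp [gStages]
  | succ n ih =>
    intro u v huv
    simp only [gStages] at huv
    by_cases hP : GReqP δ V (gStages δ V f n) (f n)
    · obtain ⟨z, ⟨hz2, hzA, hzB, hzx, hdAB, hdx⟩, heq⟩ :=
        gStep_spec δ V (gStages δ V f n) (f n) hP
      rw [heq] at huv
      simp only [Finset.mem_union, Finset.mem_image] at huv
      rcases huv with huv | ⟨a, ha, hae⟩
      · exact ih u v huv
      · have hza : z ≠ a := fun hh => hzA (hh ▸ ha)
        have hda : dist (a : S) (z : S) < δ := hdAB a (Finset.mem_union_left _ ha)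
        rw [Sym2.eq_iff] at hae
        rcases hae with ⟨h1, h2⟩ | ⟨h1, h2⟩ <;> subst h1 <;> subst h2
        · exact ⟨hza, by rwa [dist_comm]⟩
        · exact ⟨hza.symm, hda⟩
    · rw [gStep_neg δ V (gStages δ V f n) (f n) hP] at huv
      exact ih u v huv

lemma gStages_frozen (δ : ℝ) (V : Set S) (f : ℕ → GReq V) {n m : ℕ} (h : n ≤ m)
    (u v : ↥V) (hu : u ∈ (gStages δ V f n).2) (hv : v ∈ (gStages δ V f n).2)
    (huv : s(u, v) ∈ (gStages δ V f m).1) : s(u, v) ∈ (gStages δ V f n).1 := by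
  induction m, h using Nat.le_induction with
  | base => exact huv
  | succ m hm ih =>
    simp only [gStages] at huv
    by_cases hP : GReqP δ V (gStages δ V f m) (f m)
    · obtain ⟨z, ⟨hz2, _⟩, heq⟩ := gStep_spec δ V (gStages δ V f m) (f m) hP
      rw [heq] at huv
      simp only [Finset.mem_union, Finset.mem_image] at huv
      rcases huv with huv | ⟨a, ha, hae⟩
      · exact ih huv
      · exfalso
        have hmono := (gStages_mono δ V f hm).2
        rw [Sym2.eq_iff] at hae
        rcases hae with ⟨h1, h2⟩ | ⟨h1, h2⟩
        · exact hz2 (h1 ▸ hmono hu)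
        · exact hz2 (h1 ▸ hmono hv)
    · rw [gStep_neg δ V (gStages δ V f m) (f m) hP] at huv
      exact ih huv

/-- In a set dense in itself, any ball around a point of the set contains a point
of the set avoiding any given finite set. -/
lemma denseInItself_avoid {V : Set S} (hVd : DenseInItself V) {x : S} (hx : x ∈ V)
    (F : Finset S) : ∀ ε : ℝ, 0 < ε → ∃ z ∈ V, z ∉ F ∧ z ≠ x ∧ dist z x < ε := by
  induction F using Finset.induction with
  | empty =>
    intro ε hε
    obtain ⟨y, hyV, hyx, hd⟩ := hVd x hx ε hε
    exact ⟨y, hyV, by simp, hyx, hd⟩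
  | @insert a F ha ih =>
    intro ε hε
    by_cases hax : a = x
    · obtain ⟨z, hzV, hzF, hzx, hd⟩ := ih ε hε
      refine ⟨z, hzV, ?_, hzx, hd⟩
      simp only [Finset.mem_insert, not_or]
      exact ⟨hax ▸ hzx, hzF⟩
    · have hda : 0 < dist a x := dist_pos.2 hax
      obtain ⟨z, hzV, hzF, hzx, hd⟩ := ih (min ε (dist a x)) (lt_min hε hda)
      refine ⟨z, hzV, ?_, hzx, hd.trans_le (min_le_left _ _)⟩
      simp only [Finset.mem_insert, not_or]
      refine ⟨fun hza => ?_, hzF⟩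
      subst hza
      exact absurd (hd.trans_le (min_le_right _ _)) (lt_irrefl _)

/-- A valid requirement always has a fresh witness. -/
lemma gReqP_holds {δ : ℝ} (hδ : 0 < δ) {V : Set S} (hVd : DenseInItself V)
    (st : Finset (Sym2 ↥V) × Finset ↥V) (q : ℚ) (hq : 0 < (q : ℝ)) (x : ↥V)
    (A B : Finset ↥V) (hAB : ∀ u ∈ A ∪ B, dist (u : S) (x : S) < δ) :
    GReqP δ V st (q, x, A, B) := by
  classical
  set ε : ℝ := if h : (A ∪ B).Nonempty
    then min (q : ℝ) ((A ∪ B).inf' h (fun u => δ - dist (u : S) (x : S)))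
    else (q : ℝ) with hε
  have hεq : ε ≤ (q : ℝ) := by
    rw [hε]; split
    · exact min_le_left _ _
    · exact le_rfl
  have hεpos : 0 < ε := by
    rw [hε]; split
    · rename_i h
      refine lt_min hq ?_
      rw [Finset.lt_inf'_iff]
      intro u hu
      linarith [hAB u hu]
    · exact hq
  have hεu : ∀ u ∈ A ∪ B, ε ≤ δ - dist (u : S) (x : S) := by
    intro u hu
    rw [hε, dif_pos ⟨u, hu⟩]
    exact (min_le_right _ _).trans (Finset.inf'_le _ hu)
  obtain ⟨z, hzV, hzF, hzx, hzd⟩ := denseInItself_avoid hVd x.2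
    ((st.2 ∪ A ∪ B).image (Subtype.val)) ε hεpos
  refine ⟨⟨z, hzV⟩, ?_, ?_, ?_, ?_, ?_, ?_⟩
  · intro hmem
    exact hzF (Finset.mem_image_of_mem _ (by simp only [Finset.mem_union]; tauto : (⟨z, hzV⟩ : ↥V) ∈ st.2 ∪ A ∪ B))
  · intro hmem
    exact hzF (Finset.mem_image_of_mem _ (by simp only [Finset.mem_union]; tauto : (⟨z, hzV⟩ : ↥V) ∈ st.2 ∪ A ∪ B))
  · intro hmem
    exact hzF (Finset.mem_image_of_mem _ (by simp only [Finset.mem_union]; tauto : (⟨z, hzV⟩ : ↥V) ∈ st.2 ∪ A ∪ B))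
  · exact fun hh => hzx (congrArg Subtype.val hh)
  · intro u hu
    have h1 := hεu u hu
    have h2 : dist (u : S) z ≤ dist (u : S) (x : S) + dist (x : S) z := dist_triangle _ _ _
    have h3 : dist (x : S) z < ε := by rwa [dist_comm]
    show dist (u : S) z < δ
    linarith
  · show dist (x : S) z < (q : ℝ)
    rw [dist_comm]
    exact hzd.trans_le hεq

end LargConstruction

theorem exists_geometric_graph {S : Type*} [MetricSpace S] (δ : ℝ) (hδ : 0 < δ)
    (V : Set S) (hVc : V.Countable) (hVd : DenseInItself V) :
    ∃ G : SimpleGraph V, IsGeometricGraph G δ := by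
  classical
  by_cases hne : Nonempty ↥V
  · have hcV : Countable ↥V := hVc.to_subtype
    obtain ⟨f, hf⟩ := exists_surjective_nat (GReq V)
    refine ⟨{ Adj := fun u v => u ≠ v ∧ ∃ n, s(u, v) ∈ (gStages δ V f n).1,
              symm := ?_, loopless := ?_ }, ?_, ?_⟩
    · constructor
      rintro u v ⟨huv, n, hn⟩
      exact ⟨huv.symm, n, by rwa [Sym2.eq_swap]⟩
    · constructor
      rintro u ⟨h, -⟩
      exact h rfl
    · -- IsGEC
      intro δ' hδ'0 hδ'δ x A B hdisj hxA hxB hdist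
      obtain ⟨q, hq0, hqδ'⟩ := exists_rat_btwn hδ'0
      obtain ⟨n, hn⟩ := hf (q, x, A, B)
      have hP : GReqP δ V (gStages δ V f n) (f n) := by
        rw [hn]
        exact gReqP_holds hδ hVd _ q hq0 x A B
          (fun u hu => hdist u (Finset.mem_union.mp hu))
      obtain ⟨z, ⟨hz2, hzA, hzB, hzx, hdAB, hdx⟩, heq⟩ :=
        gStep_spec δ V (gStages δ V f n) (f n) hP
      rw [hn] at heq hzA hzB hzx hdAB hdx
      have hstage : gStages δ V f (n + 1) =
          ((gStages δ V f n).1 ∪ A.image (fun a => s(z, a)),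
            insert z (insert x ((gStages δ V f n).2 ∪ A ∪ B))) := by
        simp only [gStages, hn]
        exact heq
      refine ⟨z, hzA, hzB, hzx, ?_, ?_, ?_, ?_⟩
      · intro a ha
        refine ⟨fun h => hzA (h ▸ ha), n + 1, ?_⟩
        rw [hstage]
        exact Finset.mem_union_right _ (Finset.mem_image_of_mem _ ha)
      · rintro b hb ⟨hzb, m, hm⟩
        have hm' : s(z, b) ∈ (gStages δ V f (max m (n + 1))).1 :=
          (gStages_mono δ V f (le_max_left _ _)).1 hm
        have hzmem : z ∈ (gStages δ V f (n + 1)).2 := by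
          rw [hstage]; exact Finset.mem_insert_self _ _
        have hbmem : b ∈ (gStages δ V f (n + 1)).2 := by
          rw [hstage]
          simp only [Finset.mem_insert, Finset.mem_union]
          tauto
        have hfroz := gStages_frozen δ V f (le_max_right m (n + 1)) z b hzmem hbmem hm'
        rw [hstage] at hfroz
        simp only [Finset.mem_union, Finset.mem_image] at hfroz
        rcases hfroz with hfroz | ⟨a, ha, hae⟩
        · exact hz2 (gStages_endpoints δ V f n z b hfroz).1
        · rw [Sym2.eq_iff] at hae
          rcases hae with ⟨h1, h2⟩ | ⟨h1, h2⟩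
          · rw [← h2] at hb
            exact Finset.disjoint_left.mp hdisj ha hb
          · rw [h2] at ha
            exact hzA ha
      · intro u hu
        exact hdAB u (Finset.mem_union.mpr hu)
      · exact hdx.trans hqδ'
    · -- HasThreshold
      rintro u v ⟨huv, n, hn⟩
      exact (gStages_threshold δ V f n u v hn).2
  · refine ⟨⊥, ?_, ?_⟩
    · intro δ' _ _ x
      exact absurd ⟨x⟩ hne
    · intro u v h
      exact absurd h (by simp)
end

section
/- Let (S, d) be a metric space, δ > 0, and let U ⊆ S be such that U ⊆ B_δ(x) for some x ∈ U, where B_δ(x) is the open ball of radius δ about x. Then every graph with vertex set U that is geometrically existentially closed at level δ is existentially closed. -/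
open MeasureTheory Metric

theorem gec_in_ball_is_ec {S : Type*} [MetricSpace S] (δ : ℝ) (hδ : 0 < δ)
    (U : Set S) (x : S) (hx : x ∈ U) (hU : U ⊆ Metric.ball x δ)
    (G : SimpleGraph U) (hG : IsGEC G δ) : IsEC G := by
  classical
  intro A B hAB
  set x' : U := ⟨x, hx⟩ with hx'
  have key : ∀ u : U, dist (u : S) x < δ := fun u => Metric.mem_ball.mp (hU u.2)
  -- find ε > 0 with dist u x + ε ≤ δ for all u ∈ A ∪ B
  obtain ⟨ε, hε0, hε⟩ : ∃ ε, 0 < ε ∧ ∀ u : U, u ∈ A ∨ u ∈ B → dist (u : S) x + ε ≤ δ := by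
    rcases (A ∪ B).eq_empty_or_nonempty with h | hne
    · exact ⟨δ, hδ, fun u hu => by
        have : u ∈ A ∪ B := Finset.mem_union.mpr hu
        simp [h] at this⟩
    · set m := (A ∪ B).sup' hne (fun u => dist (u : S) x) with hm
      have hmδ : m < δ := by
        rw [hm, Finset.sup'_lt_iff]
        exact fun u _ => key u
      refine ⟨δ - m, by linarith, fun u hu => ?_⟩
      have : dist (u : S) x ≤ m := Finset.le_sup' (fun u : U => dist (u : S) x) (Finset.mem_union.mpr hu)
      linarith
  set δ₀ := min ε (δ / 2) with hδ₀
  have hδ₀0 : 0 < δ₀ := lt_min hε0 (by linarith)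
  have hδ₀δ : δ₀ < δ := lt_of_le_of_lt (min_le_right _ _) (by linarith)
  set C := (A ∪ B).erase x' with hC
  obtain ⟨z, -, hzC, hzx, -, -, -, hdxz⟩ :=
    hG δ₀ hδ₀0 hδ₀δ x' ∅ C (Finset.disjoint_empty_left _) (Finset.notMem_empty _)
      (Finset.notMem_erase _ _)
      (fun u hu => by
        rcases hu with hu | hu
        · simp at hu
        · exact key u)
  have hzAB : z ∉ A ∪ B := fun h => hzC (Finset.mem_erase.mpr ⟨hzx, h⟩)
  have hdist : ∀ u : U, u ∈ A ∨ u ∈ B → dist (u : S) (z : S) < δ := by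
    intro u hu
    have h1 : dist (u : S) x + ε ≤ δ := hε u hu
    have h2 : dist (x : S) (z : S) < ε := lt_of_lt_of_le hdxz (min_le_left _ _)
    calc dist (u : S) (z : S) ≤ dist (u : S) x + dist (x : S) (z : S) := dist_triangle _ _ _
      _ < δ := by linarith
  obtain ⟨w, hwA, hwB, -, hwadjA, hwadjB, -, -⟩ :=
    hG (δ / 2) (by linarith) (by linarith) z A B hAB
      (fun h => hzAB (Finset.mem_union_left _ h))
      (fun h => hzAB (Finset.mem_union_right _ h)) hdist
  exact ⟨w, hwA, hwB, hwadjA, hwadjB⟩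
end
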